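/- Let k ≥ 1, and let n be an integer with 3·4^{k−1} ≤ n < 4^k written in base 4 as n = Σ_{i=0}^{k−1} μ_i 4^i with μ_i ∈ {0,1,2,3}. Define digits ε_i^{(1)}, ε_i^{(2)} ∈ {1,2} by: (ε^{(1)}, ε^{(2)}) = (2,1) if μ_i = 0; (1,1) if μ_i = 1; (2,2) if μ_i = 2; (1,2) if μ_i = 3. Then a = Σ ε_i^{(1)} 4^i and b = Σ ε_i^{(2)} 4^i satisfy 2b = a + n and a < b < n. -/
import Mathlib

lemma stmt_18_geom3 (m : ℕ) : ∑ i ∈ Finset.range m, 3 * 4 ^ i + 1 = 4 ^ m := by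
  induction m with
  | zero => simp
  | succ m ih => rw [Finset.sum_range_succ, pow_succ]; omega

theorem stmt_18 (k n : ℕ) (hk : 1 ≤ k)
    (h1 : 3 * 4 ^ (k - 1) ≤ n) (h2 : n < 4 ^ k)
    (μ ε₁ ε₂ : ℕ → ℕ) (hμ : ∀ i < k, μ i ≤ 3)
    (hn : n = ∑ i ∈ Finset.range k, μ i * 4 ^ i)
    (hε : ∀ i < k,
      (μ i = 0 → ε₁ i = 2 ∧ ε₂ i = 1) ∧
      (μ i = 1 → ε₁ i = 1 ∧ ε₂ i = 1) ∧
      (μ i = 2 → ε₁ i = 2 ∧ ε₂ i = 2) ∧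
      (μ i = 3 → ε₁ i = 1 ∧ ε₂ i = 2)) :
    2 * (∑ i ∈ Finset.range k, ε₂ i * 4 ^ i)
        = (∑ i ∈ Finset.range k, ε₁ i * 4 ^ i) + n ∧
      (∑ i ∈ Finset.range k, ε₁ i * 4 ^ i) < ∑ i ∈ Finset.range k, ε₂ i * 4 ^ i ∧
      (∑ i ∈ Finset.range k, ε₂ i * 4 ^ i) < n := by
  obtain ⟨m, rfl⟩ : ∃ m, k = m + 1 := ⟨k - 1, by omega⟩
  simp only [Nat.add_sub_cancel] at h1
  have key : ∀ i < m + 1, ε₂ i ≤ μ i + 1 ∧ 2 * ε₂ i = ε₁ i + μ i := by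
    intro i hi
    obtain ⟨e0, e1, e2, e3⟩ := hε i hi
    have hμi := hμ i hi
    have h : μ i = 0 ∨ μ i = 1 ∨ μ i = 2 ∨ μ i = 3 := by omega
    rcases h with h | h | h | h
    · obtain ⟨a, b⟩ := e0 h; omega
    · obtain ⟨a, b⟩ := e1 h; omega
    · obtain ⟨a, b⟩ := e2 h; omega
    · obtain ⟨a, b⟩ := e3 h; omega
  have hsum : 2 * (∑ i ∈ Finset.range (m + 1), ε₂ i * 4 ^ i)
      = (∑ i ∈ Finset.range (m + 1), ε₁ i * 4 ^ i) + n := by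
    rw [hn, Finset.mul_sum, ← Finset.sum_add_distrib]
    refine Finset.sum_congr rfl fun i hi => ?_
    have h := (key i (Finset.mem_range.mp hi)).2
    rw [← mul_assoc, h, add_mul]
  -- lower digits bound
  have hgeom := stmt_18_geom3 m
  have hbound : ∑ i ∈ Finset.range m, μ i * 4 ^ i < 4 ^ m := by
    have h : ∑ i ∈ Finset.range m, μ i * 4 ^ i ≤ ∑ i ∈ Finset.range m, 3 * 4 ^ i :=
      Finset.sum_le_sum (fun i hi =>
        Nat.mul_le_mul_right _ (hμ i (by have := Finset.mem_range.mp hi; omega)))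
    omega
  have hnsplit : n = ∑ i ∈ Finset.range m, μ i * 4 ^ i + μ m * 4 ^ m := by
    rw [hn, Finset.sum_range_succ]
  have hμm : μ m = 3 := by
    have hμm3 := hμ m (by omega)
    by_contra h
    have h2' : μ m ≤ 2 := by omega
    have h3 : μ m * 4 ^ m ≤ 2 * 4 ^ m := Nat.mul_le_mul_right _ h2'
    omega
  rw [hμm] at hnsplit
  have hεm : ε₁ m = 1 ∧ ε₂ m = 2 := (hε m (by omega)).2.2.2 hμm
  have hb2 : ∑ i ∈ Finset.range m, ε₂ i * 4 ^ i
      ≤ ∑ i ∈ Finset.range m, μ i * 4 ^ i + ∑ i ∈ Finset.range m, 4 ^ i := by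
    rw [← Finset.sum_add_distrib]
    refine Finset.sum_le_sum fun i hi => ?_
    have h := (key i (by have := Finset.mem_range.mp hi; omega)).1
    calc ε₂ i * 4 ^ i ≤ (μ i + 1) * 4 ^ i := Nat.mul_le_mul_right _ h
      _ = μ i * 4 ^ i + 4 ^ i := by ring
  have hgeom1 : ∑ i ∈ Finset.range m, 4 ^ i < 4 ^ m := by
    have h : (3 : ℕ) * ∑ i ∈ Finset.range m, 4 ^ i = ∑ i ∈ Finset.range m, 3 * 4 ^ i :=
      Finset.mul_sum _ _ _
    omega
  have hbn : (∑ i ∈ Finset.range (m + 1), ε₂ i * 4 ^ i) < n := by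
    rw [Finset.sum_range_succ, hεm.2]
    omega
  exact ⟨hsum, by omega, hbn⟩
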